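/- Let T : PSym(3) → Sym(3) be continuous, satisfy T(1) = 0 and the law of superposition, and suppose that for every α > 0 there exists s ∈ ℝ with T(diag(α, 1/α, 1)) = diag(s, −s, 0). Then there exists a constant c ∈ ℝ such that T(diag(α, 1/α, 1)) = c · diag(ln α, −ln α, 0) for all α > 0. -/

import Mathlib

open Matrix

/-- If `T : PSym(3) → Sym(3)` is continuous, satisfies `T(1) = 0` and the
law of superposition, and maps every pure shear stretch `diag(α, 1/α, 1)` (`α > 0`) to a
pure shear stress `diag(s, −s, 0)`, then there is a constant `c` with
`T(diag(α, 1/α, 1)) = c · diag(ln α, −ln α, 0)` for all `α > 0`. -/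
theorem shear_stress_is_logarithmic
    (T : Matrix (Fin 3) (Fin 3) ℝ → Matrix (Fin 3) (Fin 3) ℝ)
    (hSym : ∀ U : Matrix (Fin 3) (Fin 3) ℝ, U.PosDef → (T U).IsHermitian)
    (hCont : ContinuousOn T {U : Matrix (Fin 3) (Fin 3) ℝ | U.PosDef})
    (hOne : T 1 = 0)
    (hSup : ∀ U₁ U₂ : Matrix (Fin 3) (Fin 3) ℝ, U₁.PosDef → U₂.PosDef →
      U₁ * U₂ = U₂ * U₁ → T (U₁ * U₂) = T U₁ + T U₂)
    (hShear : ∀ a : ℝ, 0 < a → ∃ s : ℝ,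
      T (Matrix.diagonal ![a, a⁻¹, 1]) = Matrix.diagonal ![s, -s, 0]) :
    ∃ c : ℝ, ∀ a : ℝ, 0 < a →
      T (Matrix.diagonal ![a, a⁻¹, 1])
        = c • Matrix.diagonal ![Real.log a, -Real.log a, 0] := by
  set D : ℝ → Matrix (Fin 3) (Fin 3) ℝ := fun a => Matrix.diagonal ![a, a⁻¹, 1] with hD
  have hDpos : ∀ a : ℝ, 0 < a → (D a).PosDef := by
    intro a ha
    refine Matrix.posDef_diagonal_iff.mpr ?_
    intro i; fin_cases i <;> simp [ha, inv_pos.mpr ha]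
  have hDmul : ∀ a b : ℝ, 0 < a → 0 < b → D a * D b = D (a * b) := by
    intro a b ha hb
    simp only [hD, Matrix.diagonal_mul_diagonal]
    have hv : (fun i => ![a, a⁻¹, 1] i * ![b, b⁻¹, (1:ℝ)] i) = ![a * b, (a * b)⁻¹, 1] := by
      funext i; fin_cases i <;> simp [mul_inv, mul_comm]
    rw [hv]
  set φ : ℝ → ℝ := fun a => T (D a) 0 0 with hφ
  have hTφ : ∀ a : ℝ, 0 < a → T (D a) = Matrix.diagonal ![φ a, -φ a, 0] := by
    intro a ha
    obtain ⟨s, hs⟩ := hShear a ha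
    have hsa : φ a = s := by
      simp only [hφ]
      rw [show Matrix.diagonal ![a, a⁻¹, (1:ℝ)] = D a from rfl] at hs
      rw [hs]; simp [Matrix.diagonal_apply_eq]
    rw [show Matrix.diagonal ![a, a⁻¹, (1:ℝ)] = D a from rfl] at hs
    rw [hs, hsa]
  have hadd : ∀ a b : ℝ, 0 < a → 0 < b → φ (a * b) = φ a + φ b := by
    intro a b ha hb
    have hcomm : D a * D b = D b * D a := by
      rw [hDmul a b ha hb, mul_comm, ← hDmul b a hb ha]
    have h := hSup (D a) (D b) (hDpos a ha) (hDpos b hb) hcomm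
    rw [hDmul a b ha hb] at h
    simp only [hφ]
    rw [h, Matrix.add_apply]
  -- continuity of φ on Ioi 0
  have hDcont : ContinuousOn D (Set.Ioi (0:ℝ)) := by
    have hvec : ContinuousOn (fun a : ℝ => (![a, a⁻¹, 1] : Fin 3 → ℝ)) (Set.Ioi 0) := by
      refine continuousOn_pi.mpr fun i => ?_
      fin_cases i
      · exact continuousOn_id
      · exact continuousOn_inv₀.mono (by intro x hx; exact ne_of_gt hx)
      · exact continuousOn_const
    intro a ha
    exact (continuous_id.matrix_diagonal.continuousOn.comp hvec (Set.mapsTo_univ _ _)) a ha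
  have hφcont : ContinuousOn φ (Set.Ioi (0:ℝ)) := by
    have h1 : ContinuousOn (fun a : ℝ => T (D a)) (Set.Ioi 0) := by
      refine hCont.comp hDcont fun a ha => ?_
      exact hDpos a ha
    exact ((continuous_apply (0 : Fin 3)).comp (continuous_apply (0 : Fin 3))).comp_continuousOn h1
  -- the additive function g
  set g : ℝ → ℝ := fun t => φ (Real.exp t) with hg
  have hgadd : ∀ s t : ℝ, g (s + t) = g s + g t := by
    intro s t
    simp only [hg, Real.exp_add]
    exact hadd _ _ (Real.exp_pos s) (Real.exp_pos t)
  have hgcont : Continuous g := by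
    rw [← continuousOn_univ]
    exact hφcont.comp Real.continuous_exp.continuousOn
      (fun t _ => Set.mem_Ioi.mpr (Real.exp_pos t))
  set f : ℝ →+ ℝ := AddMonoidHom.mk' g hgadd with hf
  have hlin : ∀ t : ℝ, g t = t * g 1 := by
    intro t
    have := (f.toRealLinearMap hgcont).map_smul t 1
    simp only [smul_eq_mul, mul_one] at this
    have hc := AddMonoidHom.coe_toRealLinearMap f hgcont
    calc g t = f.toRealLinearMap hgcont t := by rw [hc]; rfl
    _ = t * f.toRealLinearMap hgcont 1 := by rw [this]
    _ = t * g 1 := by rw [hc]; rfl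
  refine ⟨g 1, fun a ha => ?_⟩
  have hφa : φ a = Real.log a * g 1 := by
    have : g (Real.log a) = φ a := by simp only [hg, Real.exp_log ha]
    rw [← this, hlin]
  rw [show Matrix.diagonal ![a, a⁻¹, (1:ℝ)] = D a from rfl, hTφ a ha, hφa]
  ext i j
  rw [Matrix.smul_apply]
  by_cases hij : i = j
  · subst hij
    rw [Matrix.diagonal_apply_eq, Matrix.diagonal_apply_eq]
    fin_cases i <;> simp [mul_comm]
  · rw [Matrix.diagonal_apply_ne _ hij, Matrix.diagonal_apply_ne _ hij, smul_zero]
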